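/- Let A and B be nonempty finite types, δ ∈ [0,1], b₀ ∈ B, and let W be a unitary on EuclideanSpace ℂ (A × B). Suppose that for every a ∈ A there is a unit vector χ_a ∈ EuclideanSpace ℂ B with ‖W(e_a ⊗ e_{b₀}) − e_a ⊗ χ_a‖ ≤ √δ, and that ‖χ_a − χ_{a'}‖ ≤ 4·δ^{1/4} for all a, a' ∈ A. Then for every unit vector ψ ∈ EuclideanSpace ℂ A, ‖(⟨ψ| ⊗ I)(W(ψ ⊗ e_{b₀}))‖² ≥ 1 − 10·√(card A)·δ^{1/4}. (Lemma 5.6 of the paper: if a unitary acts almost as the identity on every computational basis state with nearly identical ancilla outputs, then it acts almost as the identity on every input state; with card A = 2^n this is the bound 1 − 10·2^{n/2}·δ^{1/4}.) -/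

import Mathlib

/-- Pure tensor: `(u ⊗ w)(a, b) = u a * w b`. -/
def tens {A B : Type*} (u : EuclideanSpace ℂ A) (w : EuclideanSpace ℂ B) :
    EuclideanSpace ℂ (A × B) :=
  WithLp.toLp 2 (fun p : A × B => u p.1 * w p.2)

/-- Partial inner product: `(⟨u|⊗I)v (b) = Σ_a conj (u a) * v (a, b)`. -/
noncomputable def pinner {A B : Type*} [Fintype A] (u : EuclideanSpace ℂ A)
    (v : EuclideanSpace ℂ (A × B)) : EuclideanSpace ℂ B :=
  WithLp.toLp 2 (fun b => ∑ a, (starRingEnd ℂ) (u a) * v (a, b))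

lemma normsq_eq {ι : Type*} [Fintype ι] (v : EuclideanSpace ℂ ι) :
    ‖v‖ ^ 2 = ∑ i, ‖v i‖ ^ 2 := by
  rw [EuclideanSpace.norm_eq, Real.sq_sqrt (by positivity)]

lemma pinner_norm_le {A B : Type*} [Fintype A] [Fintype B] (u : EuclideanSpace ℂ A)
    (v : EuclideanSpace ℂ (A × B)) : ‖pinner u v‖ ≤ ‖u‖ * ‖v‖ := by
  set vb : B → EuclideanSpace ℂ A := fun b => WithLp.toLp 2 (fun a => v (a, b)) with hvb
  have key : ‖pinner u v‖ ^ 2 ≤ (‖u‖ * ‖v‖) ^ 2 := by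
    rw [normsq_eq]
    have hb : ∀ b, ‖pinner u v b‖ ^ 2 ≤ ‖u‖ ^ 2 * ‖vb b‖ ^ 2 := by
      intro b
      have h1 : pinner u v b = inner ℂ u (vb b) := by
        rw [PiLp.inner_apply]; simp [pinner, vb, RCLike.inner_apply, mul_comm]
      rw [h1, ← mul_pow]
      exact pow_le_pow_left₀ (norm_nonneg _) (norm_inner_le_norm _ _) 2
    calc ∑ b, ‖pinner u v b‖ ^ 2
        ≤ ∑ b, ‖u‖ ^ 2 * ‖vb b‖ ^ 2 := Finset.sum_le_sum (fun b _ => hb b)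
      _ = (‖u‖ * ‖v‖) ^ 2 := by
          rw [← Finset.mul_sum, mul_pow]
          congr 1
          rw [normsq_eq v, Fintype.sum_prod_type_right]
          simp_rw [normsq_eq]
          rfl
  nlinarith [norm_nonneg (pinner u v), mul_nonneg (norm_nonneg u) (norm_nonneg v)]

lemma pinner_sub {A B : Type*} [Fintype A] [Fintype B] (u : EuclideanSpace ℂ A)
    (v w : EuclideanSpace ℂ (A × B)) : pinner u (v - w) = pinner u v - pinner u w := by
  ext b
  simp [pinner, mul_sub, Finset.sum_sub_distrib]

lemma pinner_tens_self {A B : Type*} [Fintype A] [Fintype B] (ψ : EuclideanSpace ℂ A)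
    (hψ : ‖ψ‖ = 1) (w : EuclideanSpace ℂ B) : pinner ψ (tens ψ w) = w := by
  have h : ∑ a, (starRingEnd ℂ) (ψ a) * ψ a = 1 := by
    have h2 := PiLp.inner_apply (𝕜 := ℂ) ψ ψ
    rw [inner_self_eq_norm_sq_to_K, hψ] at h2
    simpa [RCLike.inner_apply, Complex.conj_mul'] using h2.symm
  ext b
  show (∑ a, (starRingEnd ℂ) (ψ a) * (ψ a * w b)) = w b
  calc ∑ a, (starRingEnd ℂ) (ψ a) * (ψ a * w b)
      = (∑ a, (starRingEnd ℂ) (ψ a) * ψ a) * w b := by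
        rw [Finset.sum_mul]; congr 1; funext a; ring
    _ = w b := by rw [h, one_mul]

lemma sum_single_tens {A B : Type*} [Fintype A] [DecidableEq A]
    (ψ : EuclideanSpace ℂ A) (w : A → EuclideanSpace ℂ B) (p : A × B) :
    (∑ a, ψ a • tens (EuclideanSpace.single a 1) (w a)) p = ψ p.1 * w p.1 p.2 := by
  rw [WithLp.ofLp_sum, Finset.sum_apply]
  simp only [PiLp.smul_apply, tens, PiLp.toLp_apply, EuclideanSpace.single_apply, smul_eq_mul,
    mul_ite, ite_mul, one_mul, zero_mul, mul_zero]
  simp [Finset.sum_ite_eq]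

lemma normsq_mul_fam {A B : Type*} [Fintype A] [Fintype B]
    (ψ : EuclideanSpace ℂ A) (w : A → EuclideanSpace ℂ B)
    (v : EuclideanSpace ℂ (A × B)) (hv : ∀ p, v p = ψ p.1 * w p.1 p.2) :
    ‖v‖ ^ 2 = ∑ a, ‖ψ a‖ ^ 2 * ‖w a‖ ^ 2 := by
  rw [normsq_eq, Fintype.sum_prod_type]
  refine Finset.sum_congr rfl (fun a _ => ?_)
  simp_rw [hv, norm_mul, mul_pow, ← Finset.mul_sum, normsq_eq]

set_option maxHeartbeats 1000000 in
/-- If a unitary acts almost as the identity on every computational basis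
state with nearly identical ancilla outputs, then it acts almost as the
identity on every input state:
`‖(⟨ψ|⊗I)(W(ψ ⊗ e_{b₀}))‖² ≥ 1 − 10·√(card A)·δ^{1/4}`. -/
theorem near_identity_on_all_states {A B : Type*} [Fintype A] [Fintype B]
    [DecidableEq A] [DecidableEq B] [Nonempty A] [Nonempty B]
    (δ : ℝ) (hδ0 : 0 ≤ δ) (hδ1 : δ ≤ 1) (b₀ : B)
    (W : EuclideanSpace ℂ (A × B) ≃ₗᵢ[ℂ] EuclideanSpace ℂ (A × B))
    (χ : A → EuclideanSpace ℂ B) (hχ : ∀ a, ‖χ a‖ = 1)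
    (happrox : ∀ a,
      ‖W (tens (EuclideanSpace.single a 1) (EuclideanSpace.single b₀ 1)) -
        tens (EuclideanSpace.single a 1) (χ a)‖ ≤ Real.sqrt δ)
    (hclose : ∀ a a', ‖χ a - χ a'‖ ≤ 4 * δ ^ ((1 : ℝ) / 4)) :
    ∀ ψ : EuclideanSpace ℂ A, ‖ψ‖ = 1 →
      1 - 10 * Real.sqrt (Fintype.card A) * δ ^ ((1 : ℝ) / 4) ≤
        ‖pinner ψ (W (tens ψ (EuclideanSpace.single b₀ 1)))‖ ^ 2 := by
  intro ψ hψ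
  obtain ⟨a₀⟩ := ‹Nonempty A›
  set t : ℝ := δ ^ ((1 : ℝ) / 4) with ht
  have ht0 : 0 ≤ t := Real.rpow_nonneg hδ0 _
  have ht1 : t ≤ 1 := Real.rpow_le_one hδ0 hδ1 (by norm_num)
  have hsqrt : Real.sqrt δ = t ^ 2 := by
    rw [Real.sqrt_eq_rpow, ht, ← Real.rpow_natCast (δ ^ ((1:ℝ)/4)) 2,
      ← Real.rpow_mul hδ0]
    norm_num
  set c : ℝ := Real.sqrt (Fintype.card A) with hc
  have hcard : 1 ≤ c := by
    rw [hc, show (1:ℝ) = Real.sqrt 1 by simp]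
    exact Real.sqrt_le_sqrt (by exact_mod_cast Fintype.card_pos)
  have hψsq : ∑ a, ‖ψ a‖ ^ 2 = 1 := by
    have := normsq_eq ψ
    rw [hψ] at this; linarith
  set e : EuclideanSpace ℂ B := EuclideanSpace.single b₀ 1 with he
  set χ₀ : EuclideanSpace ℂ B := χ a₀ with hχ₀
  set v1 : EuclideanSpace ℂ (A × B) := W (tens ψ e) with hv1
  set v2 : EuclideanSpace ℂ (A × B) := ∑ a, ψ a • tens (EuclideanSpace.single a 1) (χ a) with hv2
  set v3 : EuclideanSpace ℂ (A × B) := tens ψ χ₀ with hv3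
  -- bound ‖v1 - v2‖
  have hsum_abs : ∑ a, ‖ψ a‖ ≤ c := by
    calc ∑ a, ‖ψ a‖ = ∑ a, ‖ψ a‖ * 1 := by simp
      _ ≤ Real.sqrt (∑ a, ‖ψ a‖ ^ 2) * Real.sqrt (∑ _a : A, (1:ℝ) ^ 2) :=
          Real.sum_mul_le_sqrt_mul_sqrt _ _ _
      _ = c := by rw [hψsq]; simp [hc]
  have h12 : ‖v1 - v2‖ ≤ c * t ^ 2 := by
    have hdec : tens ψ e = ∑ a, ψ a • tens (EuclideanSpace.single a 1) e := by
      ext p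
      rw [sum_single_tens]
      rfl
    have hW : v1 = ∑ a, ψ a • W (tens (EuclideanSpace.single a 1) e) := by
      rw [hv1, hdec, map_sum]
      simp_rw [map_smul]
    have : v1 - v2 = ∑ a, ψ a •
        (W (tens (EuclideanSpace.single a 1) e) - tens (EuclideanSpace.single a 1) (χ a)) := by
      rw [hW, hv2, ← Finset.sum_sub_distrib]
      simp_rw [smul_sub]
    rw [this]
    calc ‖∑ a, ψ a • (W (tens (EuclideanSpace.single a 1) e) -
            tens (EuclideanSpace.single a 1) (χ a))‖
        ≤ ∑ a, ‖ψ a • (W (tens (EuclideanSpace.single a 1) e) -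
            tens (EuclideanSpace.single a 1) (χ a))‖ := norm_sum_le _ _
      _ ≤ ∑ a, ‖ψ a‖ * Real.sqrt δ := by
          refine Finset.sum_le_sum (fun a _ => ?_)
          rw [norm_smul]
          exact mul_le_mul_of_nonneg_left (happrox a) (norm_nonneg _)
      _ = (∑ a, ‖ψ a‖) * Real.sqrt δ := by rw [← Finset.sum_mul]
      _ ≤ c * t ^ 2 := by
          rw [hsqrt]
          exact mul_le_mul_of_nonneg_right hsum_abs (by positivity)
  -- bound ‖v2 - v3‖
  have h23 : ‖v2 - v3‖ ≤ 4 * t := by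
    have hptw : ∀ p, (v2 - v3) p = ψ p.1 * (fun a => χ a - χ₀) p.1 p.2 := by
      intro p
      rw [PiLp.sub_apply, hv2, sum_single_tens]
      show ψ p.1 * χ p.1 p.2 - ψ p.1 * χ₀ p.2 = ψ p.1 * (χ p.1 - χ₀) p.2
      rw [PiLp.sub_apply]; ring
    have hnsq := normsq_mul_fam ψ (fun a => χ a - χ₀) (v2 - v3) hptw
    have hbd : ‖v2 - v3‖ ^ 2 ≤ (4 * t) ^ 2 := by
      rw [hnsq]
      calc ∑ a, ‖ψ a‖ ^ 2 * ‖χ a - χ₀‖ ^ 2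
          ≤ ∑ a, ‖ψ a‖ ^ 2 * (4 * t) ^ 2 := by
            refine Finset.sum_le_sum (fun a _ => ?_)
            refine mul_le_mul_of_nonneg_left ?_ (by positivity)
            exact pow_le_pow_left₀ (norm_nonneg _) (hclose a a₀) 2
        _ = (4 * t) ^ 2 := by rw [← Finset.sum_mul, hψsq, one_mul]
    nlinarith [norm_nonneg (v2 - v3), ht0]
  -- conclude
  have h13 : ‖v1 - v3‖ ≤ c * t ^ 2 + 4 * t := by
    calc ‖v1 - v3‖ = ‖(v1 - v2) + (v2 - v3)‖ := by rw [sub_add_sub_cancel]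
      _ ≤ ‖v1 - v2‖ + ‖v2 - v3‖ := norm_add_le _ _
      _ ≤ c * t ^ 2 + 4 * t := add_le_add h12 h23
  have hz : pinner ψ v3 = χ₀ := pinner_tens_self ψ hψ χ₀
  have hy : ‖pinner ψ v1 - χ₀‖ ≤ c * t ^ 2 + 4 * t := by
    have hstep : ‖pinner ψ (v1 - v3)‖ ≤ ‖v1 - v3‖ := by
      have := pinner_norm_le ψ (v1 - v3)
      rwa [hψ, one_mul] at this
    rw [← hz, ← pinner_sub]
    exact hstep.trans h13
  have hylb : 1 - (c * t ^ 2 + 4 * t) ≤ ‖pinner ψ v1‖ := by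
    have h1 : ‖χ₀‖ - ‖pinner ψ v1 - χ₀‖ ≤ ‖pinner ψ v1‖ := by
      have := norm_sub_norm_le (pinner ψ v1) χ₀
      have h2 := abs_norm_sub_norm_le (pinner ψ v1) χ₀
      have := abs_le.mp h2
      linarith [this.1]
    rw [hχ₀, hχ a₀] at h1
    linarith
  have hyn : (0:ℝ) ≤ ‖pinner ψ v1‖ := norm_nonneg _
  have hε : c * t ^ 2 + 4 * t ≤ 5 * c * t := by
    nlinarith [mul_nonneg (sub_nonneg.mpr hcard) ht0,
      mul_nonneg (mul_nonneg (le_trans zero_le_one hcard) ht0) (sub_nonneg.mpr ht1)]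
  have hε0 : (0:ℝ) ≤ c * t ^ 2 + 4 * t := by positivity
  have key : 1 - 2 * (c * t ^ 2 + 4 * t) ≤ ‖pinner ψ v1‖ ^ 2 := by
    rcases le_or_gt (1 - (c * t ^ 2 + 4 * t)) 0 with h | h
    · nlinarith [sq_nonneg ‖pinner ψ v1‖]
    · have h2 := pow_le_pow_left₀ h.le hylb 2
      nlinarith [sq_nonneg (c * t ^ 2 + 4 * t)]
  linarith
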